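/- Fix an integer m ≥ 2 and p ∈ (0,1). With S, Q, the Ising channel P(y|x,s), and the input distribution u as follows — P(y|x,s) = 1 if x = s = y, 1/2 if x ≠ s and y ∈ {x,s}, 0 otherwise; u(x|s,(1,s)) = p if x = s and (1-p)/(m-1) if x ≠ s; u(x|s,(0,q_s)) = 1[x = s] — define for each node q ∈ Bool × Fin m the belief vector z_q on S by: z_{(1,q_s)}(s) = 1[s = q_s]; z_{(0,q_s)}(q_s) = 2p/(1+p) and z_{(0,q_s)}(s) = (1-p)/((1+p)(m-1)) for s ≠ q_s; and the test distribution T(y|(1,q_s)) = (1+p)/2 if y = q_s and (1-p)/(2(m-1)) otherwise, T(y|(0,q_s)) = 2p/(1+p) if y = q_s and (1-p)/((1+p)(m-1)) otherwise. Then for every node q and every output y ∈ Fin m: Σ_{s,x} z_q(s)·u(x|s,q)·P(y|x,s) = T(y|q). -/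

import Mathlib

/-- The Ising channel law `P(y|x,s)`. -/
noncomputable def IsingP {m : ℕ} (y x s : Fin m) : ℝ :=
  if x = s then (if y = s then 1 else 0)
  else if y = x ∨ y = s then 1 / 2 else 0

/-- The test distribution `T(y|q)` of the Q-graph for `|X| ≤ 8`. -/
noncomputable def testT (p : ℝ) {m : ℕ} (y : Fin m) (q : Bool × Fin m) : ℝ :=
  if q.1 then (if y = q.2 then (1 + p) / 2 else (1 - p) / (2 * ((m : ℝ) - 1)))
  else (if y = q.2 then 2 * p / (1 + p) else (1 - p) / ((1 + p) * ((m : ℝ) - 1)))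

/-- BCJR invariance, Lemma 2 of the paper: with the belief vectors
`z_{(1,q_s)}(s) = 1[s = q_s]`, `z_{(0,q_s)}(q_s) = 2p/(1+p)` and
`z_{(0,q_s)}(s) = (1-p)/((1+p)(m-1))` for `s ≠ q_s`, and the input distribution `u`
with `u(x|s,(1,s)) = p` if `x = s` and `(1-p)/(m-1)` otherwise and
`u(x|s,(0,q_s)) = 1[x = s]`, one has
`Σ_{s,x} z_q(s)·u(x|s,q)·P(y|x,s) = T(y|q)` for every node `q` and output `y`. -/
theorem ising_bcjr_invariance (m : ℕ) (hm : 2 ≤ m) (p : ℝ)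
    (hp : p ∈ Set.Ioo (0 : ℝ) 1)
    (u : Fin m → Fin m → Bool × Fin m → ℝ)
    (hu_known : ∀ s x : Fin m,
      u x s (true, s) = if x = s then p else (1 - p) / ((m : ℝ) - 1))
    (hu_unknown : ∀ (s qs x : Fin m),
      u x s (false, qs) = if x = s then 1 else 0) :
    let z : Bool × Fin m → Fin m → ℝ := fun q s =>
      if q.1 then (if s = q.2 then 1 else 0)
      else (if s = q.2 then 2 * p / (1 + p) else (1 - p) / ((1 + p) * ((m : ℝ) - 1)))
    ∀ (q : Bool × Fin m) (y : Fin m),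
      ∑ s : Fin m, ∑ x : Fin m, z q s * u x s q * IsingP y x s = testT p y q := by
  intro z q y
  obtain ⟨b, qs⟩ := q
  have hm' : (2:ℝ) ≤ (m:ℝ) := by exact_mod_cast hm
  have hm1 : (m:ℝ) - 1 ≠ 0 := by linarith
  have hp1 : (1:ℝ) + p ≠ 0 := ne_of_gt (by linarith [hp.1])
  have hcard : ((Finset.univ.erase qs).card : ℝ) = (m:ℝ) - 1 := by
    rw [Finset.card_erase_of_mem (Finset.mem_univ _), Finset.card_univ, Fintype.card_fin,
      Nat.cast_sub (by omega), Nat.cast_one]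
  cases b
  · -- unknown node
    have hinner : ∀ s : Fin m,
        (∑ x : Fin m, z (false, qs) s * u x s (false, qs) * IsingP y x s)
        = z (false, qs) s * (if y = s then 1 else 0) := by
      intro s
      rw [Finset.sum_eq_single s]
      · simp [hu_unknown, IsingP]
      · intro x _ hx; simp [hu_unknown, hx]
      · simp
    rw [Finset.sum_congr rfl fun s _ => hinner s]
    rw [Finset.sum_eq_single y]
    · simp only [z, testT]
      by_cases hy : y = qs <;> simp [hy]
    · intro s _ hs
      have : ¬ (y = s) := fun h => hs h.symm
      simp [this]
    · simp
  · -- known node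
    have hz : ∀ s, z (true, qs) s = if s = qs then 1 else 0 := fun s => by simp [z]
    have houter : ∀ s : Fin m,
        (∑ x : Fin m, z (true, qs) s * u x s (true, qs) * IsingP y x s)
        = (if s = qs then 1 else 0) * ∑ x : Fin m, u x s (true, qs) * IsingP y x s := by
      intro s
      rw [Finset.mul_sum]
      exact Finset.sum_congr rfl fun x _ => by rw [hz]; ring
    rw [Finset.sum_congr rfl fun s _ => houter s]
    rw [Finset.sum_eq_single qs]
    · rw [if_pos rfl, one_mul]
      have hrw : ∀ x : Fin m, u x qs (true, qs) * IsingP y x qs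
          = (if x = qs then p else (1 - p) / ((m:ℝ) - 1)) * IsingP y x qs := by
        intro x; rw [hu_known]
      rw [Finset.sum_congr rfl fun x _ => hrw x]
      rw [← Finset.add_sum_erase _ _ (Finset.mem_univ qs)]
      have hfirst : (if qs = qs then p else (1 - p) / ((m:ℝ) - 1)) * IsingP y qs qs
          = p * (if y = qs then 1 else 0) := by simp [IsingP]
      rw [hfirst]
      by_cases hy : y = qs
      · have hrest : ∀ x ∈ Finset.univ.erase qs,
            (if x = qs then p else (1 - p) / ((m:ℝ) - 1)) * IsingP y x qs
            = (1 - p) / ((m:ℝ) - 1) * (1/2) := by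
          intro x hx
          have hx' : x ≠ qs := Finset.ne_of_mem_erase hx
          simp [IsingP, hx', hy]
        rw [Finset.sum_congr rfl hrest, Finset.sum_const, nsmul_eq_mul, hcard]
        simp only [testT, if_pos rfl, if_pos hy]
        field_simp
        simp only [↓reduceIte]
        ring
      · have hrest : ∀ x ∈ Finset.univ.erase qs,
            (if x = qs then p else (1 - p) / ((m:ℝ) - 1)) * IsingP y x qs
            = if x = y then (1 - p) / ((m:ℝ) - 1) * (1/2) else 0 := by
          intro x hx
          have hx' : x ≠ qs := Finset.ne_of_mem_erase hx
          by_cases hxy : x = y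
          · simp [IsingP, hx', hxy.symm]
          · have : ¬ (y = x ∨ y = qs) := by
              push_neg; exact ⟨fun h => hxy h.symm, hy⟩
            simp [IsingP, hx', this, hxy]
        rw [Finset.sum_congr rfl hrest, Finset.sum_ite_eq']
        have hmem : y ∈ Finset.univ.erase qs := Finset.mem_erase.mpr ⟨hy, Finset.mem_univ _⟩
        rw [if_pos hmem]
        rw [if_neg hy, mul_zero, zero_add]
        simp only [testT, if_neg hy, if_true]
        rw [div_mul_div_comm, mul_one, mul_comm ((m:ℝ)-1) 2]
    · intro s _ hs; simp [hs]
    · simp
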